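/- Gross-Pitaevskii violation of momentum conservation by the third moment (Appendix B): let σ₀ > 0, x₀, p₀ ∈ ℝ and define φ : ℝ → ℂ by φ(x) = (π σ₀²)^{−1/4} exp(−(x−x₀)²/(2σ₀²)) · exp(i p₀ x²). Then Im ∫_ℝ conj(φ(x)) · |φ(x)|² · (i φ'''(x)) dx = −6 p₀² x₀ / √(2π σ₀²). Via d/dt⟨aⁿ⟩ = −2λ Im⟨φ| |φ|² aⁿ |φ⟩ this gives d/dt⟨φ| p³ |φ⟩ = 12 λ p₀² x₀ / √(2π σ₀²), so the third momentum moment is also time-dependent in Gross-Pitaevskii theory. -/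

import Mathlib

open Real Complex MeasureTheory Filter Set

lemma gp_int_deriv_zero {H h : ℝ → ℝ} (hd : ∀ x, HasDerivAt H (h x) x)
    (hint : Integrable h) (htop : Tendsto H atTop (nhds 0))
    (hbot : Tendsto H atBot (nhds 0)) : ∫ x, h x = 0 := by
  have h1 : ∫ x in Iic (0:ℝ), h x = H 0 - 0 :=
    integral_Iic_of_hasDerivAt_of_tendsto' (fun x _ => hd x) hint.integrableOn hbot
  have h2 : ∫ x in Ioi (0:ℝ), h x = 0 - H 0 :=
    integral_Ioi_of_hasDerivAt_of_tendsto' (fun x _ => hd x) hint.integrableOn htop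
  rw [← intervalIntegral.integral_Iic_add_Ioi hint.integrableOn hint.integrableOn, h1, h2]
  ring

lemma gp_integrable_pow_gauss {b : ℝ} (hb : 0 < b) (k : ℕ) :
    Integrable (fun x : ℝ => x ^ k * Real.exp (-b * x ^ 2)) := by
  have := integrable_rpow_mul_exp_neg_mul_sq hb (s := (k : ℝ)) (by exact lt_of_lt_of_le (by norm_num) (Nat.cast_nonneg k))
  simpa [Real.rpow_natCast] using this

lemma gp_tendsto_pow_gauss_top {b : ℝ} (hb : 0 < b) (k : ℕ) :
    Tendsto (fun x : ℝ => x ^ k * Real.exp (-b * x ^ 2)) atTop (nhds 0) := by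
  have hexp : Tendsto (fun x : ℝ => Real.exp (-(1/2) * x)) atTop (nhds 0) := by
    apply Real.tendsto_exp_atBot.comp
    exact Tendsto.const_mul_atTop_of_neg (by norm_num) tendsto_id
  have := (rpow_mul_exp_neg_mul_sq_isLittleO_exp_neg hb (k : ℝ)).tendsto_zero_of_tendsto hexp
  simpa [Real.rpow_natCast] using this

lemma gp_tendsto_pow_gauss_bot {b : ℝ} (hb : 0 < b) (k : ℕ) :
    Tendsto (fun x : ℝ => x ^ k * Real.exp (-b * x ^ 2)) atBot (nhds 0) := by
  have h := ((gp_tendsto_pow_gauss_top hb k).comp tendsto_neg_atBot_atTop).const_mul ((-1 : ℝ) ^ k)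
  simp only [Function.comp] at h
  have : (fun x : ℝ => (-1:ℝ)^k * ((-x) ^ k * Real.exp (-b * (-x) ^ 2)))
      = fun x : ℝ => x ^ k * Real.exp (-b * x ^ 2) := by
    funext x
    rw [neg_sq, ← mul_assoc, ← mul_pow, neg_one_mul, neg_neg]
  rw [this] at h
  simpa using h

lemma gp_real_integral (σ₀ x₀ p₀ : ℝ) (hσ : 0 < σ₀) :
    ∫ w : ℝ, Real.exp (-(2/σ₀^2) * w^2) *
      (-12*p₀^2*x₀ + (3/σ₀^4 - 12*p₀^2 + 12*p₀^2*x₀^2/σ₀^2)*w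
        + (24*p₀^2*x₀/σ₀^2)*w^2 + (12*p₀^2/σ₀^2 - 1/σ₀^6)*w^3)
    = -6*p₀^2*x₀ * Real.sqrt (π/(2/σ₀^2)) := by
  have hσ' : σ₀ ≠ 0 := ne_of_gt hσ
  set b : ℝ := 2/σ₀^2 with hbdef
  have hb : 0 < b := by positivity
  set E : ℝ → ℝ := fun w => Real.exp (-b * w^2) with hE
  set P1 : ℝ → ℝ := fun w => -12*p₀^2*x₀ + (3/σ₀^4 - 12*p₀^2 + 12*p₀^2*x₀^2/σ₀^2)*w
        + (24*p₀^2*x₀/σ₀^2)*w^2 + (12*p₀^2/σ₀^2 - 1/σ₀^6)*w^3 with hP1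
  set β : ℝ := 1/(4*σ₀^4) - 3*p₀^2 with hβ
  set γ : ℝ := -6*p₀^2*x₀ with hγ
  set δ : ℝ := -5/(8*σ₀^2) + (3/2)*p₀^2*σ₀^2 - 3*p₀^2*x₀^2 with hδ
  set H : ℝ → ℝ := fun w => (β*w^2 + γ*w + δ) * E w with hH
  set h : ℝ → ℝ := fun w => E w * P1 w - (-6*p₀^2*x₀) * E w with hh
  -- integrability of E * P1
  have hiE : Integrable E := integrable_exp_neg_mul_sq hb
  have hiEP : Integrable (fun w => E w * P1 w) := by
    have : (fun w => E w * P1 w) = fun w =>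
        (-12*p₀^2*x₀) * (w^0 * Real.exp (-b*w^2))
        + (3/σ₀^4 - 12*p₀^2 + 12*p₀^2*x₀^2/σ₀^2) * (w^1 * Real.exp (-b*w^2))
        + (24*p₀^2*x₀/σ₀^2) * (w^2 * Real.exp (-b*w^2))
        + (12*p₀^2/σ₀^2 - 1/σ₀^6) * (w^3 * Real.exp (-b*w^2)) := by
      funext w; simp only [hE, hP1]; ring
    rw [this]
    exact ((((gp_integrable_pow_gauss hb 0).const_mul _).add
      ((gp_integrable_pow_gauss hb 1).const_mul _)).add
      ((gp_integrable_pow_gauss hb 2).const_mul _)).add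
      ((gp_integrable_pow_gauss hb 3).const_mul _)
  have hih : Integrable h := hiEP.sub (hiE.const_mul _)
  -- derivative
  have hd : ∀ w : ℝ, HasDerivAt H (h w) w := by
    intro w
    have hQ : HasDerivAt (fun w : ℝ => β*w^2 + γ*w + δ) (2*β*w + γ) w := by
      have h1 : HasDerivAt (fun w : ℝ => β*w^2) (β*(2*w)) w := by
        simpa using (hasDerivAt_pow 2 w).const_mul β
      have h2 : HasDerivAt (fun w : ℝ => γ*w) γ w := by
        simpa using (hasDerivAt_id w).const_mul γ
      have h3 := (h1.add h2).add_const δ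
      refine h3.congr_deriv ?_
      ring
    have hEd : HasDerivAt E (E w * (-b * (2*w))) w := by
      have h2 : HasDerivAt (fun w : ℝ => -b * w^2) (-b*(2*w)) w := by
        simpa using (hasDerivAt_pow 2 w).const_mul (-b)
      exact h2.exp
    have := hQ.mul hEd
    refine this.congr_deriv ?_
    simp only [hh, hE, hP1, hβ, hγ, hδ, hbdef]
    field_simp
    ring
  -- limits
  have htop : Tendsto H atTop (nhds 0) := by
    have : H = fun w => β * (w^2 * Real.exp (-b*w^2)) + γ * (w^1 * Real.exp (-b*w^2))
        + δ * (w^0 * Real.exp (-b*w^2)) := by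
      funext w; simp only [hH, hE]; ring
    rw [this]
    have := (((gp_tendsto_pow_gauss_top hb 2).const_mul β).add
      ((gp_tendsto_pow_gauss_top hb 1).const_mul γ)).add
      ((gp_tendsto_pow_gauss_top hb 0).const_mul δ)
    simpa using this
  have hbot : Tendsto H atBot (nhds 0) := by
    have : H = fun w => β * (w^2 * Real.exp (-b*w^2)) + γ * (w^1 * Real.exp (-b*w^2))
        + δ * (w^0 * Real.exp (-b*w^2)) := by
      funext w; simp only [hH, hE]; ring
    rw [this]
    have := (((gp_tendsto_pow_gauss_bot hb 2).const_mul β).add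
      ((gp_tendsto_pow_gauss_bot hb 1).const_mul γ)).add
      ((gp_tendsto_pow_gauss_bot hb 0).const_mul δ)
    simpa using this
  have hzero : ∫ w, h w = 0 := gp_int_deriv_zero hd hih htop hbot
  have hsplit : (fun w => E w * P1 w) = fun w => h w + (-6*p₀^2*x₀) * E w := by
    funext w; simp only [hh]; ring
  calc ∫ w : ℝ, E w * P1 w = ∫ w, (h w + (-6*p₀^2*x₀) * E w) := by rw [hsplit]
    _ = (∫ w, h w) + ∫ w, (-6*p₀^2*x₀) * E w := integral_add hih (hiE.const_mul _)
    _ = -6*p₀^2*x₀ * Real.sqrt (π/b) := by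
        rw [hzero, zero_add, integral_const_mul]
        rw [hE]
        simp only [integral_gaussian]
open Real Complex MeasureTheory Filter Set

noncomputable def gpF (σ₀ x₀ p₀ : ℝ) : ℂ → ℂ := fun z =>
  (((π * σ₀ ^ 2) ^ (-(1 / 4 : ℝ)) : ℝ) : ℂ)
    * Complex.exp (-(z - (x₀:ℂ))^2/(2*(σ₀:ℂ)^2) + Complex.I*(p₀:ℂ)*z^2)

noncomputable def gpd1 (σ₀ x₀ p₀ : ℝ) : ℂ → ℂ := fun z =>
  -(z - (x₀:ℂ))/(σ₀:ℂ)^2 + 2*Complex.I*(p₀:ℂ)*z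

noncomputable def gpd2 (σ₀ p₀ : ℝ) : ℂ := -1/(σ₀:ℂ)^2 + 2*Complex.I*(p₀:ℂ)

variable {σ₀ x₀ p₀ : ℝ}

lemma gpd1_hasDeriv (z : ℂ) : HasDerivAt (gpd1 σ₀ x₀ p₀) (gpd2 σ₀ p₀) z := by
  have h1 : HasDerivAt (fun z : ℂ => -(z - (x₀:ℂ))/(σ₀:ℂ)^2) (-1/(σ₀:ℂ)^2) z := by
    simpa using (((hasDerivAt_id z).sub_const (x₀:ℂ)).neg).div_const ((σ₀:ℂ)^2)
  have h2 : HasDerivAt (fun z : ℂ => 2*Complex.I*(p₀:ℂ)*z) (2*Complex.I*(p₀:ℂ)) z := by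
    simpa using (hasDerivAt_id z).const_mul (2*Complex.I*(p₀:ℂ))
  exact h1.add h2

lemma gpF_hasDeriv (hσ : σ₀ ≠ 0) (z : ℂ) :
    HasDerivAt (gpF σ₀ x₀ p₀) (gpd1 σ₀ x₀ p₀ z * gpF σ₀ x₀ p₀ z) z := by
  have hσc : (σ₀:ℂ) ≠ 0 := Complex.ofReal_ne_zero.mpr hσ
  have h1 : HasDerivAt (fun z : ℂ => -(z - (x₀:ℂ))^2/(2*(σ₀:ℂ)^2))
      (-(2*(z - (x₀:ℂ)))/(2*(σ₀:ℂ)^2)) z := by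
    have := ((((hasDerivAt_id z).sub_const (x₀:ℂ)).pow 2).neg).div_const (2*(σ₀:ℂ)^2)
    simpa using this
  have h2 : HasDerivAt (fun z : ℂ => Complex.I*(p₀:ℂ)*z^2) (Complex.I*(p₀:ℂ)*(2*z)) z := by
    have := (hasDerivAt_pow 2 z).const_mul (Complex.I*(p₀:ℂ))
    simpa using this
  have h3 := ((h1.add h2).cexp).const_mul (((π * σ₀ ^ 2) ^ (-(1 / 4 : ℝ)) : ℝ) : ℂ)
  refine h3.congr_deriv ?_
  simp only [gpd1, gpF, Pi.add_apply]
  field_simp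

lemma gpF_hasDeriv2 (hσ : σ₀ ≠ 0) (z : ℂ) :
    HasDerivAt (fun z => gpd1 σ₀ x₀ p₀ z * gpF σ₀ x₀ p₀ z)
      ((gpd2 σ₀ p₀ + (gpd1 σ₀ x₀ p₀ z)^2) * gpF σ₀ x₀ p₀ z) z := by
  have := (gpd1_hasDeriv (σ₀:=σ₀) (x₀:=x₀) (p₀:=p₀) z).mul (gpF_hasDeriv (σ₀:=σ₀) (x₀:=x₀) (p₀:=p₀) hσ z)
  refine this.congr_deriv ?_
  ring

lemma gpF_hasDeriv3 (hσ : σ₀ ≠ 0) (z : ℂ) :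
    HasDerivAt (fun z => (gpd2 σ₀ p₀ + (gpd1 σ₀ x₀ p₀ z)^2) * gpF σ₀ x₀ p₀ z)
      ((3 * gpd1 σ₀ x₀ p₀ z * gpd2 σ₀ p₀ + (gpd1 σ₀ x₀ p₀ z)^3) * gpF σ₀ x₀ p₀ z) z := by
  have h1 : HasDerivAt (fun z => gpd2 σ₀ p₀ + (gpd1 σ₀ x₀ p₀ z)^2)
      (2 * gpd1 σ₀ x₀ p₀ z * gpd2 σ₀ p₀) z := by
    have := ((gpd1_hasDeriv (σ₀:=σ₀) (x₀:=x₀) (p₀:=p₀) z).pow 2).const_add (gpd2 σ₀ p₀)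
    simpa [mul_comm, mul_assoc, mul_left_comm] using this
  have := h1.mul (gpF_hasDeriv (σ₀:=σ₀) (x₀:=x₀) (p₀:=p₀) hσ z)
  refine this.congr_deriv ?_
  ring

lemma gp_IS_decomp (a b c d : ℝ) :
    3*(((a:ℂ) + (b:ℂ)*Complex.I))*(((c:ℂ) + (d:ℂ)*Complex.I))
      + (((a:ℂ) + (b:ℂ)*Complex.I))^3
    = ((3*(a*c-b*d) + a^3 - 3*a*b^2 : ℝ) : ℂ)
      + ((3*(a*d+b*c) + 3*a^2*b - b^3 : ℝ) : ℂ) * Complex.I := by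
  push_cast
  linear_combination (3*(b:ℂ)*d + 3*(a:ℂ)*(b:ℂ)^2 + (b:ℂ)^3*Complex.I) * Complex.I_sq

lemma gp_integrable_cubic {b : ℝ} (hb : 0 < b) (A0 A1 A2 A3 : ℝ) :
    Integrable (fun w : ℝ => Real.exp (-b*w^2) * (A0 + A1*w + A2*w^2 + A3*w^3)) := by
  have : (fun w : ℝ => Real.exp (-b*w^2) * (A0 + A1*w + A2*w^2 + A3*w^3)) = fun w =>
      A0 * (w^0 * Real.exp (-b*w^2)) + A1 * (w^1 * Real.exp (-b*w^2))
      + A2 * (w^2 * Real.exp (-b*w^2)) + A3 * (w^3 * Real.exp (-b*w^2)) := by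
    funext w; ring
  rw [this]
  exact ((((gp_integrable_pow_gauss hb 0).const_mul _).add
    ((gp_integrable_pow_gauss hb 1).const_mul _)).add
    ((gp_integrable_pow_gauss hb 2).const_mul _)).add
    ((gp_integrable_pow_gauss hb 3).const_mul _)

lemma gp_cplx_rearrange (A P1x P2x : ℝ) :
    (↑A : ℂ) * (↑A * (Complex.I * ((↑P1x : ℂ) + (↑P2x : ℂ) * Complex.I)))
      = ((-(A*A*P2x) : ℝ) : ℂ) + ((A*A*P1x : ℝ) : ℂ) * Complex.I := by
  push_cast
  linear_combination ((A:ℂ)*(A:ℂ)*(P2x:ℂ)) * Complex.I_sq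

/-- **Gross-Pitaevskii violation of momentum conservation by the third moment
(Appendix B).** For the momentum-chirped Gaussian orbital,
`Im ⟪φ, |φ|² p³ φ⟫ = -6 p₀² x₀ / √(2π σ₀²)` with `(p³ φ)(x) = i φ'''(x)`, so that
`d/dt ⟨φ| p³ |φ⟩ = 12 λ p₀² x₀ / √(2π σ₀²)` in Gross-Pitaevskii theory. -/
theorem gp_violation_momentum_cubed
    (σ₀ x₀ p₀ : ℝ) (hσ : 0 < σ₀) (φ : ℝ → ℂ)
    (hφ : ∀ x : ℝ, φ x =
      (((π * σ₀ ^ 2) ^ (-(1 / 4 : ℝ)) : ℝ) : ℂ)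
        * Complex.exp (-((x - x₀ : ℝ) : ℂ) ^ 2 / (2 * (σ₀ : ℂ) ^ 2))
        * Complex.exp (Complex.I * (p₀ : ℂ) * (x : ℂ) ^ 2)) :
    (∫ x : ℝ, (starRingEnd ℂ) (φ x) * (‖φ x‖ ^ 2 : ℂ)
        * (Complex.I * deriv (deriv (deriv φ)) x)).im
      = -(6 * p₀ ^ 2 * x₀) / Real.sqrt (2 * π * σ₀ ^ 2) := by
  have hσ' : σ₀ ≠ 0 := ne_of_gt hσ
  have hπσ : 0 < π * σ₀ ^ 2 := by positivity
  set C : ℝ := (π * σ₀ ^ 2) ^ (-(1 / 4 : ℝ)) with hCdef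
  have hCpos : 0 < C := Real.rpow_pos_of_pos hπσ _
  -- φ equals gpF
  have hφF : φ = fun x : ℝ => gpF σ₀ x₀ p₀ (x : ℂ) := by
    funext x
    rw [hφ x]
    simp only [gpF]
    rw [mul_assoc, ← Complex.exp_add]
    congr 2
    push_cast
    ring
  -- third derivative
  have h3 : deriv (deriv (deriv φ)) = fun x : ℝ =>
      (3 * gpd1 σ₀ x₀ p₀ (x:ℂ) * gpd2 σ₀ p₀ + (gpd1 σ₀ x₀ p₀ (x:ℂ))^3) * gpF σ₀ x₀ p₀ (x:ℂ) := by
    have h1 : deriv φ = fun x : ℝ => gpd1 σ₀ x₀ p₀ (x:ℂ) * gpF σ₀ x₀ p₀ (x:ℂ) := by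
      rw [hφF]; funext x
      exact ((gpF_hasDeriv (σ₀:=σ₀) (x₀:=x₀) (p₀:=p₀) hσ' (x:ℂ)).comp_ofReal).deriv
    have h2 : deriv (deriv φ) = fun x : ℝ =>
        (gpd2 σ₀ p₀ + (gpd1 σ₀ x₀ p₀ (x:ℂ))^2) * gpF σ₀ x₀ p₀ (x:ℂ) := by
      rw [h1]; funext x
      exact ((gpF_hasDeriv2 (σ₀:=σ₀) (x₀:=x₀) (p₀:=p₀) hσ' (x:ℂ)).comp_ofReal).deriv
    rw [h2]; funext x
    exact ((gpF_hasDeriv3 (σ₀:=σ₀) (x₀:=x₀) (p₀:=p₀) hσ' (x:ℂ)).comp_ofReal).deriv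
  -- norm of gpF
  have hnorm : ∀ x : ℝ, ‖gpF σ₀ x₀ p₀ (x:ℂ)‖ ^ 2 = C^2 * Real.exp (-(x-x₀)^2/σ₀^2) := by
    intro x
    have harg : (-((x:ℂ) - (x₀:ℂ))^2/(2*(σ₀:ℂ)^2) + Complex.I*(p₀:ℂ)*(x:ℂ)^2)
        = ((-(x-x₀)^2/(2*σ₀^2) : ℝ) : ℂ) + ((p₀*x^2 : ℝ) : ℂ) * Complex.I := by
      push_cast; ring
    have hgp : gpF σ₀ x₀ p₀ (x:ℂ) = (C:ℂ) * Complex.exp (((-(x-x₀)^2/(2*σ₀^2) : ℝ):ℂ) + ((p₀*x^2 : ℝ):ℂ) * Complex.I) := by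
      simp only [gpF]
      rw [harg]
    have h1 : ‖gpF σ₀ x₀ p₀ (x:ℂ)‖ = C * Real.exp (-(x-x₀)^2/(2*σ₀^2)) := by
      rw [hgp, norm_mul, Complex.norm_exp]
      have hre : ((( -(x-x₀)^2/(2*σ₀^2) : ℝ):ℂ) + ((p₀*x^2 : ℝ):ℂ) * Complex.I).re
          = -(x-x₀)^2/(2*σ₀^2) := by
        simp only [Complex.add_re, Complex.mul_re, Complex.ofReal_re, Complex.ofReal_im,
          Complex.I_re, Complex.I_im, mul_zero, zero_mul, mul_one]
        norm_num
      rw [hre, Complex.norm_real, Real.norm_eq_abs, _root_.abs_of_nonneg hCpos.le]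
    rw [h1, mul_pow, sq (Real.exp _), ← Real.exp_add]
    congr 1
    field_simp
    ring
  -- decomposition of S
  have hd1x : ∀ x : ℝ, gpd1 σ₀ x₀ p₀ (x:ℂ) = ((-(x-x₀)/σ₀^2 : ℝ) : ℂ) + ((2*p₀*x : ℝ):ℂ) * Complex.I := by
    intro x; simp only [gpd1]; push_cast; ring
  have hd2x : gpd2 σ₀ p₀ = ((-1/σ₀^2 : ℝ):ℂ) + ((2*p₀ : ℝ):ℂ) * Complex.I := by
    simp only [gpd2]; push_cast; ring
  -- the shifted integrand pieces
  set G1 : ℝ → ℝ := fun w => C^4 * (Real.exp (-(2/σ₀^2) * w^2) *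
      (-12*p₀^2*x₀ + (3/σ₀^4 - 12*p₀^2 + 12*p₀^2*x₀^2/σ₀^2)*w
        + (24*p₀^2*x₀/σ₀^2)*w^2 + (12*p₀^2/σ₀^2 - 1/σ₀^6)*w^3)) with hG1def
  set G2 : ℝ → ℝ := fun w => C^4 * (Real.exp (-(2/σ₀^2) * w^2) *
      ((8*p₀^3*x₀^3 + 6*p₀*x₀/σ₀^2) + (24*p₀^3*x₀^2 + 12*p₀/σ₀^2)*w
        + (24*p₀^3*x₀ - 6*p₀*x₀/σ₀^4)*w^2 + (8*p₀^3 - 6*p₀/σ₀^4)*w^3)) with hG2def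
  have hb2 : (0:ℝ) < 2/σ₀^2 := by positivity
  -- key pointwise identity
  have key : ∀ x : ℝ, (starRingEnd ℂ) (φ x) * (‖φ x‖ ^ 2 : ℂ)
      * (Complex.I * deriv (deriv (deriv φ)) x)
      = ((G2 (x - x₀) : ℝ) : ℂ) + ((G1 (x - x₀) : ℝ) : ℂ) * Complex.I := by
    intro x
    rw [h3, hφF]
    simp only
    rw [hd1x x, hd2x, gp_IS_decomp]
    have hcm : (starRingEnd ℂ) (gpF σ₀ x₀ p₀ (x:ℂ)) * gpF σ₀ x₀ p₀ (x:ℂ)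
        = ((‖gpF σ₀ x₀ p₀ (x:ℂ)‖^2 : ℝ) : ℂ) := by
      rw [mul_comm, Complex.mul_conj, Complex.normSq_eq_norm_sq]
    have step : (starRingEnd ℂ) (gpF σ₀ x₀ p₀ (x:ℂ)) * ((‖gpF σ₀ x₀ p₀ (x:ℂ)‖:ℂ) ^ 2)
        * (Complex.I * ((((3*((-(x-x₀)/σ₀^2)*(-1/σ₀^2) - (2*p₀*x)*(2*p₀)) + (-(x-x₀)/σ₀^2)^3 - 3*(-(x-x₀)/σ₀^2)*(2*p₀*x)^2 : ℝ):ℂ)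
            + ((3*((-(x-x₀)/σ₀^2)*(2*p₀) + (2*p₀*x)*(-1/σ₀^2)) + 3*(-(x-x₀)/σ₀^2)^2*(2*p₀*x) - (2*p₀*x)^3 : ℝ):ℂ) * Complex.I) * gpF σ₀ x₀ p₀ (x:ℂ)))
        = ((starRingEnd ℂ) (gpF σ₀ x₀ p₀ (x:ℂ)) * gpF σ₀ x₀ p₀ (x:ℂ))
          * (((‖gpF σ₀ x₀ p₀ (x:ℂ)‖^2 : ℝ):ℂ)
            * (Complex.I * ((((3*((-(x-x₀)/σ₀^2)*(-1/σ₀^2) - (2*p₀*x)*(2*p₀)) + (-(x-x₀)/σ₀^2)^3 - 3*(-(x-x₀)/σ₀^2)*(2*p₀*x)^2 : ℝ):ℂ)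
            + ((3*((-(x-x₀)/σ₀^2)*(2*p₀) + (2*p₀*x)*(-1/σ₀^2)) + 3*(-(x-x₀)/σ₀^2)^2*(2*p₀*x) - (2*p₀*x)^3 : ℝ):ℂ) * Complex.I)))) := by
      push_cast; ring
    rw [step, hcm, hnorm x, gp_cplx_rearrange]
    have hee : Real.exp (-(x-x₀)^2/σ₀^2) * Real.exp (-(x-x₀)^2/σ₀^2)
        = Real.exp (-(2/σ₀^2)*(x-x₀)^2) := by
      rw [← Real.exp_add]; congr 1; field_simp; ring
    have e2 : -((C^2 * Real.exp (-(x-x₀)^2/σ₀^2)) * (C^2 * Real.exp (-(x-x₀)^2/σ₀^2))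
        * (3*((-(x-x₀)/σ₀^2)*(2*p₀) + (2*p₀*x)*(-1/σ₀^2)) + 3*(-(x-x₀)/σ₀^2)^2*(2*p₀*x) - (2*p₀*x)^3))
        = G2 (x - x₀) := by
      rw [hG2def]
      simp only
      rw [← hee]
      field_simp
      ring
    have e1 : (C^2 * Real.exp (-(x-x₀)^2/σ₀^2)) * (C^2 * Real.exp (-(x-x₀)^2/σ₀^2))
        * (3*((-(x-x₀)/σ₀^2)*(-1/σ₀^2) - (2*p₀*x)*(2*p₀)) + (-(x-x₀)/σ₀^2)^3 - 3*(-(x-x₀)/σ₀^2)*(2*p₀*x)^2)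
        = G1 (x - x₀) := by
      rw [hG1def]
      simp only
      rw [← hee]
      field_simp
      ring
    rw [e1, e2]
  -- rewrite the integral
  rw [show (∫ x : ℝ, (starRingEnd ℂ) (φ x) * (‖φ x‖ ^ 2 : ℂ)
        * (Complex.I * deriv (deriv (deriv φ)) x))
      = ∫ x : ℝ, (((G2 (x - x₀) : ℝ) : ℂ) + ((G1 (x - x₀) : ℝ) : ℂ) * Complex.I) by
    congr 1; funext x; exact key x]
  have hiG1 : Integrable G1 := by
    rw [hG1def]
    exact (gp_integrable_cubic hb2 _ _ _ _).const_mul _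
  have hiG2 : Integrable G2 := by
    rw [hG2def]
    exact (gp_integrable_cubic hb2 _ _ _ _).const_mul _
  have hiG1s : Integrable (fun x : ℝ => G1 (x - x₀)) := hiG1.comp_sub_right x₀
  have hiG2s : Integrable (fun x : ℝ => G2 (x - x₀)) := hiG2.comp_sub_right x₀
  have hA : Integrable (fun x : ℝ => ((G2 (x - x₀) : ℝ) : ℂ)) := hiG2s.ofReal
  have hB : Integrable (fun x : ℝ => ((G1 (x - x₀) : ℝ) : ℂ) * Complex.I) :=
    (hiG1s.ofReal).mul_const _
  rw [integral_add hA hB, integral_mul_const]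
  have hio2 : (∫ x : ℝ, ((G2 (x - x₀) : ℝ) : ℂ)) = (((∫ x : ℝ, G2 (x - x₀)) : ℝ) : ℂ) :=
    integral_ofReal
  have hio1 : (∫ x : ℝ, ((G1 (x - x₀) : ℝ) : ℂ)) = (((∫ x : ℝ, G1 (x - x₀)) : ℝ) : ℂ) :=
    integral_ofReal
  rw [hio1, hio2]
  simp only [Complex.add_im, Complex.ofReal_im, Complex.mul_im, Complex.ofReal_re,
    Complex.I_im, Complex.I_re, mul_zero, mul_one, zero_add, add_zero]
  rw [integral_sub_right_eq_self G1 x₀]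
  rw [hG1def]
  rw [integral_const_mul, gp_real_integral σ₀ x₀ p₀ hσ]
  -- final constants
  have hC4 : C^4 = (π * σ₀^2)⁻¹ := by
    rw [hCdef, ← Real.rpow_natCast ((π * σ₀ ^ 2) ^ (-(1 / 4 : ℝ))) 4, ← Real.rpow_mul hπσ.le]
    norm_num [Real.rpow_neg_one, mul_inv]
  have hs1 : π/(2/σ₀^2) = π*σ₀^2/2 := by field_simp
  have hkey : Real.sqrt (π*σ₀^2/2) * Real.sqrt (2*π*σ₀^2) = π*σ₀^2 := by
    rw [← Real.sqrt_mul (by positivity : (0:ℝ) ≤ π*σ₀^2/2)]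
    rw [show π*σ₀^2/2*(2*π*σ₀^2) = (π*σ₀^2)^2 by ring]
    exact Real.sqrt_sq hπσ.le
  have hspos : 0 < Real.sqrt (2*π*σ₀^2) := Real.sqrt_pos.mpr (by positivity)
  rw [hC4, hs1, eq_div_iff (ne_of_gt hspos)]
  have expand : (π * σ₀ ^ 2)⁻¹ * (-6 * p₀ ^ 2 * x₀ * Real.sqrt (π * σ₀ ^ 2 / 2)) * Real.sqrt (2 * π * σ₀ ^ 2)
      = (π * σ₀ ^ 2)⁻¹ * (-6 * p₀ ^ 2 * x₀) * (Real.sqrt (π * σ₀ ^ 2 / 2) * Real.sqrt (2 * π * σ₀ ^ 2)) := by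
    ring
  rw [expand, hkey]
  field_simp
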